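/- For every positive integer i and every y > 1, the function x ↦ |ψ^(i)(x)| + |ψ^(i)(y)| − |ψ^(i)(xy)| tends to |ψ^(i)(y)| as x → ∞, and is strictly positive for all x ∈ (0, ∞). -/

import Mathlib

noncomputable def digamma : ℝ → ℝ := deriv (fun x => Real.log (Real.Gamma x))

noncomputable def polygamma (i : ℕ) : ℝ → ℝ := iteratedDeriv i digamma

open Filter Topology Finset

noncomputable def P (k : ℕ) (x : ℝ) : ℝ := ∑' m : ℕ, ((x + m) ^ k)⁻¹

lemma summable_aux {k : ℕ} (hk : 2 ≤ k) {x : ℝ} (hx : 0 < x) :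
    Summable (fun m : ℕ => ((x + m) ^ k)⁻¹) := by
  rw [← summable_nat_add_iff 1]
  have h2 : Summable (fun m : ℕ => (((m : ℝ) + 1) ^ 2)⁻¹) := by
    have := (summable_nat_add_iff (f := fun n : ℕ => ((n : ℝ) ^ 2)⁻¹) 1).2
      (Real.summable_nat_pow_inv.2 one_lt_two)
    simpa using this
  refine h2.of_nonneg_of_le (fun m => by positivity) (fun m => ?_)
  have h1 : (1 : ℝ) ≤ (m : ℝ) + 1 := by
    have : (0:ℝ) ≤ (m:ℝ) := Nat.cast_nonneg m
    linarith
  have : ((m : ℝ) + 1) ^ 2 ≤ (x + ↑(m + 1)) ^ k := by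
    calc ((m : ℝ) + 1) ^ 2 ≤ ((m : ℝ) + 1) ^ k := pow_le_pow_right₀ h1 hk
    _ ≤ (x + ↑(m + 1)) ^ k := by
        apply pow_le_pow_left₀ (by positivity)
        push_cast; linarith
  exact inv_anti₀ (by positivity) this

lemma P_pos {k : ℕ} (hk : 2 ≤ k) {x : ℝ} (hx : 0 < x) : 0 < P k x :=
  Summable.tsum_pos (summable_aux hk hx) (fun m => by positivity) 0 (by positivity)

lemma P_lt {k : ℕ} (hk : 2 ≤ k) {x x' : ℝ} (hx : 0 < x) (hxx : x < x') :
    P k x' < P k x := by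
  refine Summable.tsum_lt_tsum (f := fun m : ℕ => ((x' + m) ^ k)⁻¹) (i := 0)
    (fun m => ?_) ?_ (summable_aux hk (hx.trans hxx)) (summable_aux hk hx)
  · exact inv_anti₀ (by positivity) (pow_le_pow_left₀ (by positivity) (by linarith) k)
  · simp only [Nat.cast_zero, add_zero]
    exact inv_strictAnti₀ (by positivity) (pow_lt_pow_left₀ hxx hx.le (by omega))

lemma tsum_telescope {x : ℝ} (hx : 0 < x) :
    ∑' m : ℕ, ((x + m)⁻¹ - (x + m + 1)⁻¹) = x⁻¹ := by
  have hle : ∀ m : ℕ, (x + m)⁻¹ - (x + m + 1)⁻¹ ≤ ((x + m) ^ 2)⁻¹ := by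
    intro m
    have h0 : (0:ℝ) < x + m := by positivity
    have h1 : (0:ℝ) < x + m + 1 := by positivity
    calc (x + m)⁻¹ - (x + m + 1)⁻¹ = ((x + m) * (x + m + 1))⁻¹ := by
          field_simp; ring
      _ ≤ ((x + m) ^ 2)⁻¹ := inv_anti₀ (by positivity) (by nlinarith)
  have hnn : ∀ m : ℕ, 0 ≤ (x + m)⁻¹ - (x + m + 1)⁻¹ := by
    intro m
    have : (x + m + 1)⁻¹ ≤ (x + m)⁻¹ := inv_anti₀ (by positivity) (by linarith)
    linarith
  have hsum : Summable (fun m : ℕ => (x + m)⁻¹ - (x + m + 1)⁻¹) :=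
    (summable_aux le_rfl hx).of_nonneg_of_le hnn hle
  refine HasSum.tsum_eq ?_
  rw [hsum.hasSum_iff_tendsto_nat]
  have hps : ∀ n : ℕ, ∑ m ∈ range n, ((x + m)⁻¹ - (x + m + 1)⁻¹) = x⁻¹ - (x + n)⁻¹ := by
    intro n
    calc ∑ m ∈ range n, ((x + m)⁻¹ - (x + m + 1)⁻¹)
        = ∑ m ∈ range n, ((x + (m:ℝ))⁻¹ - (x + ((m+1 : ℕ) : ℝ))⁻¹) :=
          Finset.sum_congr rfl (fun m _ => by push_cast; ring_nf)
      _ = (x + ((0:ℕ):ℝ))⁻¹ - (x + n)⁻¹ := Finset.sum_range_sub' (fun m : ℕ => (x + (m:ℝ))⁻¹) n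
      _ = x⁻¹ - (x + n)⁻¹ := by norm_num
  simp_rw [hps]
  have h1 : Tendsto (fun n : ℕ => (x + n)⁻¹) atTop (𝓝 0) := by
    apply Tendsto.comp tendsto_inv_atTop_zero
    exact tendsto_atTop_add_const_left _ x tendsto_natCast_atTop_atTop
  simpa using (tendsto_const_nhds (x := x⁻¹)).sub h1

lemma P_bound {k : ℕ} (hk : 2 ≤ k) {x : ℝ} (hx : 1 ≤ x) : P k x ≤ 2 / x := by
  have hx0 : (0:ℝ) < x := lt_of_lt_of_le one_pos hx
  have hsum := summable_aux hk hx0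
  rw [P, Summable.tsum_eq_zero_add hsum]
  have h1 : ((x + ((0:ℕ):ℝ)) ^ k)⁻¹ ≤ x⁻¹ := by
    norm_num
    refine inv_anti₀ hx0 ?_
    calc x = x ^ 1 := (pow_one x).symm
    _ ≤ x ^ k := pow_le_pow_right₀ hx (by omega)
  have h2 : ∑' m : ℕ, ((x + ((m+1:ℕ):ℝ)) ^ k)⁻¹ ≤ x⁻¹ := by
    rw [← tsum_telescope hx0]
    refine Summable.tsum_le_tsum (fun m => ?_) ((summable_nat_add_iff 1).2 hsum) ?_
    · have h0 : (0:ℝ) < x + m := by positivity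
      have h1' : (0:ℝ) < x + m + 1 := by positivity
      have : (x + m)⁻¹ - (x + m + 1)⁻¹ = ((x + m) * (x + m + 1))⁻¹ := by field_simp; ring
      rw [this]
      refine inv_anti₀ (by positivity) ?_
      push_cast
      calc (x + m) * (x + m + 1) ≤ (x + m + 1) ^ 2 := by nlinarith
      _ ≤ (x + m + 1) ^ k := pow_le_pow_right₀ (by linarith) hk
      _ = (x + (m + 1)) ^ k := by ring_nf
    · have : Summable (fun m : ℕ => ((x + m) ^ 2)⁻¹) := summable_aux le_rfl hx0
      refine this.of_nonneg_of_le (fun m => ?_) (fun m => ?_)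
      · have : (x + m + 1)⁻¹ ≤ (x + m)⁻¹ := inv_anti₀ (by positivity) (by linarith)
        linarith
      · have h0 : (0:ℝ) < x + m := by positivity
        have : (x + m)⁻¹ - (x + m + 1)⁻¹ = ((x + m) * (x + m + 1))⁻¹ := by field_simp; ring
        rw [this]
        exact inv_anti₀ (by positivity) (by nlinarith)
  have h3 : (2:ℝ)/x = x⁻¹ + x⁻¹ := by ring
  rw [h3]
  exact add_le_add h1 h2

lemma P_tendsto {k : ℕ} (hk : 2 ≤ k) : Tendsto (P k) atTop (𝓝 0) := by
  have h2x : Tendsto (fun x : ℝ => 2 / x) atTop (𝓝 0) :=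
    tendsto_const_nhds.div_atTop tendsto_id
  refine tendsto_of_tendsto_of_tendsto_of_le_of_le' tendsto_const_nhds h2x ?_ ?_
  · filter_upwards [eventually_ge_atTop (1:ℝ)] with x hx
    exact le_of_lt (P_pos hk (lt_of_lt_of_le one_pos hx))
  · filter_upwards [eventually_ge_atTop (1:ℝ)] with x hx
    exact P_bound hk hx

lemma hasDerivAt_term {k : ℕ} (hk : 1 ≤ k) (m : ℕ) {y : ℝ} (hy : 0 < y + m) :
    HasDerivAt (fun z : ℝ => ((z + m) ^ k)⁻¹) (-(k:ℝ) * ((y + m) ^ (k+1))⁻¹) y := by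
  have hd : HasDerivAt (fun z : ℝ => (z + (m:ℝ)) ^ k) ((k:ℝ) * (y + m) ^ (k - 1) * 1) y :=
    ((hasDerivAt_id y).add_const (m:ℝ)).pow k
  have h2 := hd.inv (by positivity)
  refine h2.congr_deriv ?_
  rw [mul_one]
  have hne : (y + (m:ℝ)) ≠ 0 := ne_of_gt hy
  have hpow : (y + (m:ℝ)) ^ (k-1) * (y + m) ^ (k+1) = ((y + m) ^ k) ^ 2 := by
    rw [← pow_add, ← pow_mul]
    congr 1
    omega
  field_simp
  rw [hpow]

lemma hasDerivAt_P {k : ℕ} (hk : 2 ≤ k) {x : ℝ} (hx : 0 < x) :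
    HasDerivAt (P k) (-(k:ℝ) * P (k+1) x) x := by
  have hs : IsOpen (Set.Ioo (x/2) (x+1)) := isOpen_Ioo
  have hxs : x ∈ Set.Ioo (x/2) (x+1) := ⟨by linarith, by linarith⟩
  have hpos : ∀ y ∈ Set.Ioo (x/2) (x+1), 0 < y := fun y hy => lt_trans (by linarith) hy.1
  have hu : Summable (fun m : ℕ => (k:ℝ) * ((x/2 + m) ^ (k+1))⁻¹) :=
    (summable_aux (by omega) (by linarith)).mul_left _
  have key : HasDerivAt (fun y : ℝ => ∑' m : ℕ, ((y + m) ^ k)⁻¹)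
      (∑' m : ℕ, -(k:ℝ) * ((x + m) ^ (k+1))⁻¹) x := by
    refine hasDerivAt_of_tendstoUniformlyOn (f := fun (n : ℕ) (y : ℝ) => ∑ m ∈ range n, ((y + m) ^ k)⁻¹) hs
      (tendstoUniformlyOn_tsum_nat (f := fun (m : ℕ) (y : ℝ) => -(k:ℝ) * ((y + m) ^ (k+1))⁻¹) hu ?_)
      (Filter.Eventually.of_forall fun n => fun y hy => ?_) (fun y hy => ?_) hxs
    · intro m y hy
      have hy0 : 0 < y := hpos y hy
      rw [norm_mul, norm_neg, Real.norm_natCast, Real.norm_eq_abs,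
        abs_of_nonneg (by positivity)]
      refine mul_le_mul_of_nonneg_left (inv_anti₀ (by positivity)
        (pow_le_pow_left₀ (by positivity) (by push_cast; linarith [hy.1]) _)) (by positivity)
    · exact HasDerivAt.fun_sum fun m _ => hasDerivAt_term (by omega) m (by have := hpos y hy; positivity)
    · exact (summable_aux hk (hpos y hy)).hasSum.tendsto_sum_nat
  have : (∑' m : ℕ, -(k:ℝ) * ((x + m) ^ (k+1))⁻¹) = -(k:ℝ) * P (k+1) x := tsum_mul_left
  rw [this] at key
  exact key
open Filter Topology Finset

local notation "γ" => Real.eulerMascheroniConstant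

noncomputable def GG (x : ℝ) : ℝ :=
  -γ - x⁻¹ + ∑' m : ℕ, (((m:ℝ) + 1)⁻¹ - (x + m + 1)⁻¹)

lemma summable_sq : Summable (fun m : ℕ => (((m:ℝ) + 1) ^ 2)⁻¹) := by
  have := (summable_nat_add_iff (f := fun n : ℕ => ((n : ℝ) ^ 2)⁻¹) 1).2
    (Real.summable_nat_pow_inv.2 one_lt_two)
  simpa using this

lemma t_nonneg {y : ℝ} (hy : 0 < y) (m : ℕ) : 0 ≤ ((m:ℝ) + 1)⁻¹ - (y + m + 1)⁻¹ := by
  have : (y + m + 1)⁻¹ ≤ ((m:ℝ) + 1)⁻¹ := inv_anti₀ (by positivity) (by linarith)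
  linarith

lemma t_le {y : ℝ} (hy : 0 < y) (m : ℕ) :
    ((m:ℝ) + 1)⁻¹ - (y + m + 1)⁻¹ ≤ y * (((m:ℝ) + 1) ^ 2)⁻¹ := by
  have h0 : (0:ℝ) < (m:ℝ) + 1 := by positivity
  have h1 : (0:ℝ) < y + m + 1 := by positivity
  have heq : ((m:ℝ) + 1)⁻¹ - (y + m + 1)⁻¹ = y * (((m + 1) * (y + m + 1) : ℝ))⁻¹ := by
    field_simp; ring
  rw [heq]
  refine mul_le_mul_of_nonneg_left (inv_anti₀ (by positivity) ?_) hy.le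
  nlinarith

lemma summable_t {y : ℝ} (hy : 0 < y) :
    Summable (fun m : ℕ => ((m:ℝ) + 1)⁻¹ - (y + m + 1)⁻¹) :=
  (summable_sq.mul_left y).of_nonneg_of_le (t_nonneg hy) (t_le hy)

lemma hasDerivAt_logGamma {x : ℝ} (hx : 0 < x) :
    HasDerivAt (fun z => Real.log (Real.Gamma z)) (GG x) x := by
  set s : Set ℝ := Set.Ioo (x/2) (x+1) with hs_def
  have hs : IsOpen s := isOpen_Ioo
  have hxs : x ∈ s := ⟨by linarith, by linarith⟩
  have hpos : ∀ y ∈ s, 0 < y := fun y hy => lt_trans (by linarith) hy.1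
  -- uniform convergence of derivatives
  have harm_cast : ∀ n : ℕ, ((harmonic n : ℚ) : ℝ) = ∑ i ∈ range n, ((i:ℝ) + 1)⁻¹ := by
    intro n
    rw [harmonic]
    push_cast
    rfl
  have hc : Tendsto (fun n : ℕ => Real.log n - ((harmonic n : ℚ) : ℝ)) atTop (𝓝 (-γ)) := by
    have := Real.tendsto_harmonic_sub_log.neg
    simpa [neg_sub] using this
  have hA : TendstoUniformlyOn (fun (n:ℕ) (_:ℝ) => Real.log n - ((harmonic n : ℚ) : ℝ))
      (fun _ => -γ) atTop s := hc.tendstoUniformlyOn_const s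
  have hrefl : TendstoUniformlyOn (fun (_:ℕ) (y:ℝ) => y⁻¹) (fun y => y⁻¹) atTop s :=
    fun u hu => Eventually.of_forall fun n y _ => refl_mem_uniformity hu
  have hB : TendstoUniformlyOn
      (fun (n:ℕ) (y:ℝ) => ∑ m ∈ range n, (((m:ℝ) + 1)⁻¹ - (y + m + 1)⁻¹))
      (fun y => ∑' m : ℕ, (((m:ℝ) + 1)⁻¹ - (y + m + 1)⁻¹)) atTop s := by
    refine tendstoUniformlyOn_tsum_nat (u := fun m => (x+1) * (((m:ℝ)+1)^2)⁻¹)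
      (summable_sq.mul_left _) ?_
    intro m y hy
    have hy0 : 0 < y := hpos y hy
    rw [Real.norm_eq_abs, abs_of_nonneg (t_nonneg hy0 m)]
    exact le_trans (t_le hy0 m) (mul_le_mul_of_nonneg_right (by linarith [hy.2]) (by positivity))
  have hD := (hA.sub hrefl).add hB
  have hf' : TendstoUniformlyOn
      (fun (n:ℕ) (y:ℝ) => Real.log n - ∑ m ∈ range (n+1), (y + m)⁻¹)
      GG atTop s := by
    refine (hD.congr ?_).congr_right ?_
    · refine Eventually.of_forall fun n y hy => ?_
      have hy0 : 0 < y := hpos y hy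
      have hsplit : ∑ m ∈ range (n+1), (y + (m:ℝ))⁻¹
          = y⁻¹ + ∑ m ∈ range n, (y + m + 1)⁻¹ := by
        rw [Finset.sum_range_succ' (fun m : ℕ => (y + (m:ℝ))⁻¹) n]
        push_cast
        rw [add_comm]
        simp only [add_zero]
        congr 1
        exact Finset.sum_congr rfl fun m _ => by ring_nf
      simp only [Pi.add_apply, Pi.sub_apply]
      rw [Finset.sum_sub_distrib, ← harm_cast n, hsplit]
      ring
    · intro y hy
      simp only [Pi.add_apply, Pi.sub_apply, GG]
  refine hasDerivAt_of_tendstoUniformlyOn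
    (f := fun (n:ℕ) (y:ℝ) => Real.BohrMollerup.logGammaSeq y n) hs hf' ?_ ?_ hxs
  · refine Eventually.of_forall fun n y hy => ?_
    have hy0 : 0 < y := hpos y hy
    have h1 : HasDerivAt (fun z : ℝ => z * Real.log n + Real.log (Nat.factorial n)
        - ∑ m ∈ range (n+1), Real.log (z + m))
        (Real.log n - ∑ m ∈ range (n+1), (y + m)⁻¹) y := by
      refine HasDerivAt.sub ?_ ?_
      · simpa using ((hasDerivAt_id y).mul_const (Real.log n)).add_const (Real.log (Nat.factorial n))
      · refine HasDerivAt.fun_sum fun m _ => ?_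
        have h2 : HasDerivAt (fun z : ℝ => z + (m:ℝ)) 1 y := (hasDerivAt_id y).add_const _
        have h3 := (Real.hasDerivAt_log (by positivity : y + (m:ℝ) ≠ 0)).comp y h2
        simpa [Function.comp_def] using h3
    exact h1.congr_of_eventuallyEq (Eventually.of_forall fun z => by
      simp [Real.BohrMollerup.logGammaSeq])
  · exact fun y hy => by simpa using Real.BohrMollerup.tendsto_log_gamma (hpos y hy)

lemma hasDerivAt_T {x : ℝ} (hx : 0 < x) :
    HasDerivAt (fun y : ℝ => ∑' m : ℕ, (((m:ℝ) + 1)⁻¹ - (y + m + 1)⁻¹))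
      (∑' m : ℕ, ((x + m + 1) ^ 2)⁻¹) x := by
  set s : Set ℝ := Set.Ioo (x/2) (x+1) with hs_def
  have hs : IsOpen s := isOpen_Ioo
  have hxs : x ∈ s := ⟨by linarith, by linarith⟩
  have hpos : ∀ y ∈ s, 0 < y := fun y hy => lt_trans (by linarith) hy.1
  refine hasDerivAt_of_tendstoUniformlyOn
    (f := fun (n:ℕ) (y:ℝ) => ∑ m ∈ range n, (((m:ℝ) + 1)⁻¹ - (y + m + 1)⁻¹))
    (f' := fun (n:ℕ) (y:ℝ) => ∑ m ∈ range n, ((y + m + 1) ^ 2)⁻¹)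
    (g' := fun (y:ℝ) => ∑' m : ℕ, ((y + m + 1) ^ 2)⁻¹) (l := atTop) hs ?_ ?_ ?_ hxs
  · refine tendstoUniformlyOn_tsum_nat (u := fun m => (((m:ℝ)+1)^2)⁻¹) summable_sq ?_
    intro m y hy
    have hy0 : 0 < y := hpos y hy
    rw [Real.norm_eq_abs, abs_of_nonneg (by positivity)]
    exact inv_anti₀ (by positivity) (pow_le_pow_left₀ (by positivity) (by linarith) 2)
  · refine Eventually.of_forall fun n y hy => ?_
    have hy0 : 0 < y := hpos y hy
    refine HasDerivAt.fun_sum fun m _ => ?_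
    have h1 := hasDerivAt_term (k := 1) le_rfl (m+1) (y := y) (by positivity)
    have h2 := (hasDerivAt_const y (((m:ℝ) + 1)⁻¹)).fun_sub h1
    have heq : (fun z : ℝ => (((m:ℝ) + 1)⁻¹ : ℝ) - ((z + ((m+1:ℕ):ℝ)) ^ 1)⁻¹)
        = (fun z : ℝ => ((m:ℝ) + 1)⁻¹ - (z + ↑m + 1)⁻¹) := by
      funext z; push_cast; ring_nf
    rw [heq] at h2
    convert h2 using 1
    push_cast; ring
  · intro y hy
    exact (summable_t (hpos y hy)).hasSum.tendsto_sum_nat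

lemma hasDerivAt_GG {x : ℝ} (hx : 0 < x) : HasDerivAt GG (P 2 x) x := by
  have h1 : HasDerivAt (fun y : ℝ => -γ - y⁻¹) ((x ^ 2)⁻¹) x := by
    have := (hasDerivAt_const x (-γ)).fun_sub (hasDerivAt_inv hx.ne')
    simpa using this
  have h2 := h1.fun_add (hasDerivAt_T hx)
  have hfun : (fun y : ℝ => -γ - y⁻¹ + ∑' m : ℕ, (((m:ℝ) + 1)⁻¹ - (y + m + 1)⁻¹)) = GG := by
    funext z; simp [GG]
  rw [hfun] at h2
  have hval : P 2 x = (x ^ 2)⁻¹ + ∑' m : ℕ, ((x + m + 1) ^ 2)⁻¹ := by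
    rw [P, Summable.tsum_eq_zero_add (summable_aux le_rfl hx)]
    push_cast
    norm_num
    congr 1
    funext m
    push_cast
    ring_nf
  rw [hval]
  exact h2

lemma digamma_eq {x : ℝ} (hx : 0 < x) : digamma x = GG x :=
  (hasDerivAt_logGamma hx).deriv

lemma polygamma_eq (i : ℕ) (hi : 1 ≤ i) :
    ∀ x : ℝ, 0 < x → polygamma i x = (-1) ^ (i+1) * (Nat.factorial i : ℝ) * P (i+1) x := by
  induction i, hi using Nat.le_induction with
  | base =>
    intro x hx
    have hev : digamma =ᶠ[𝓝 x] GG :=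
      Filter.eventuallyEq_of_mem (isOpen_Ioi.mem_nhds hx) (fun y hy => digamma_eq hy)
    rw [polygamma, iteratedDeriv_one, hev.deriv_eq, (hasDerivAt_GG hx).deriv]
    norm_num
  | succ i hi ih =>
    intro x hx
    have hev : polygamma i =ᶠ[𝓝 x]
        (fun y => (-1) ^ (i+1) * (Nat.factorial i : ℝ) * P (i+1) y) :=
      Filter.eventuallyEq_of_mem (isOpen_Ioi.mem_nhds hx) (fun y hy => ih y hy)
    have hd := (hasDerivAt_P (k := i+1) (by omega) hx).const_mul
      ((-1 : ℝ) ^ (i+1) * (Nat.factorial i : ℝ))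
    have : polygamma (i+1) x = deriv (polygamma i) x := by
      rw [polygamma, polygamma, iteratedDeriv_succ]
    rw [this, hev.deriv_eq, hd.deriv]
    have : (i+1+1) = (i+2) := rfl
    rw [Nat.factorial_succ]
    push_cast
    ring

lemma abs_polygamma (i : ℕ) (hi : 1 ≤ i) {x : ℝ} (hx : 0 < x) :
    |polygamma i x| = (Nat.factorial i : ℝ) * P (i+1) x := by
  rw [polygamma_eq i hi x hx, abs_mul, abs_mul, abs_pow, abs_neg, abs_one, one_pow, one_mul,
    abs_of_nonneg (by positivity : (0:ℝ) ≤ (Nat.factorial i : ℝ)),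
    abs_of_pos (P_pos (by omega) hx)]

theorem stmt19 (i : ℕ) (hi : 0 < i) (y : ℝ) (hy : 1 < y) :
    Filter.Tendsto (fun x : ℝ => |polygamma i x| + |polygamma i y| - |polygamma i (x * y)|)
      Filter.atTop (nhds |polygamma i y|) ∧
    ∀ x : ℝ, 0 < x → 0 < |polygamma i x| + |polygamma i y| - |polygamma i (x * y)| := by
  have hy0 : (0:ℝ) < y := lt_trans one_pos hy
  have hk : 2 ≤ i + 1 := by omega
  constructor
  · have h0 : Tendsto (fun x : ℝ => (Nat.factorial i : ℝ) * P (i+1) x) atTop (𝓝 0) := by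
      simpa using (P_tendsto hk).const_mul (Nat.factorial i : ℝ)
    have h1 : Tendsto (fun x : ℝ => |polygamma i x|) atTop (𝓝 0) := by
      refine h0.congr' ?_
      filter_upwards [eventually_gt_atTop (0:ℝ)] with x hx
      exact (abs_polygamma i hi hx).symm
    have hmul : Tendsto (fun x : ℝ => x * y) atTop atTop :=
      Tendsto.atTop_mul_const hy0 tendsto_id
    have h2 : Tendsto (fun x : ℝ => |polygamma i (x * y)|) atTop (𝓝 0) := h1.comp hmul
    have := (h1.add (tendsto_const_nhds (x := |polygamma i y|))).sub h2
    simpa using this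
  · intro x hx
    have hxy : 0 < x * y := mul_pos hx hy0
    have hlt : x < x * y := by nlinarith
    rw [abs_polygamma i hi hx, abs_polygamma i hi hy0, abs_polygamma i hi hxy]
    have hP1 : P (i+1) (x*y) < P (i+1) x := P_lt hk hx hlt
    have hP2 : 0 < P (i+1) y := P_pos hk hy0
    have hf : (0:ℝ) < (Nat.factorial i : ℝ) := by positivity
    nlinarith
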